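/- Existence part of the Neyman–Pearson lemma with randomization: for every α with 0 < α < 1 there exist a constant k ≥ 0 and a randomization weight γ ∈ [0,1] such that the test φ defined by φ(x) = 1 if f₁(x) > k·f₀(x), φ(x) = γ if f₁(x) = k·f₀(x), and φ(x) = 0 if f₁(x) < k·f₀(x), has size exactly α, i.e. ∫ φ·f₀ dν = α. -/

import Mathlib

open MeasureTheory Filter Set

section Aux

variable {X : Type*} [MeasurableSpace X] {ν : Measure X}

/-- Auxiliary: integrability of indicator pieces. -/
lemma np_aux_indicator_integrable {f₀ : X → ℝ} (hint₀ : Integrable f₀ ν)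
    {s : Set X} (hs : MeasurableSet s) :
    Integrable (Set.indicator s f₀) ν :=
  hint₀.indicator hs

end Aux

/-- Existence part of the Neyman–Pearson lemma with randomization: for every
`α` with `0 < α < 1` there exist a constant `k ≥ 0` and a randomization weight
`γ ∈ [0,1]` such that the test `φ` given by `φ x = 1` if `f₁ x > k * f₀ x`,
`φ x = γ` if `f₁ x = k * f₀ x`, and `φ x = 0` otherwise, has size exactly `α`. -/
theorem neyman_pearson_existence
    {X : Type*} [MeasurableSpace X] (ν : Measure X) [SigmaFinite ν]
    (f₀ f₁ : X → ℝ) (hf₀m : Measurable f₀) (hf₁m : Measurable f₁)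
    (hf₀ : ∀ x, 0 ≤ f₀ x) (hf₁ : ∀ x, 0 ≤ f₁ x)
    (hint₀ : Integrable f₀ ν) (hint₁ : Integrable f₁ ν)
    (hnorm₀ : ∫ x, f₀ x ∂ν = 1) (hnorm₁ : ∫ x, f₁ x ∂ν = 1)
    (α : ℝ) (hα₀ : 0 < α) (hα₁ : α < 1) :
    ∃ (k γ : ℝ), 0 ≤ k ∧ 0 ≤ γ ∧ γ ≤ 1 ∧
      ∫ x, (if f₁ x > k * f₀ x then (1 : ℝ)
            else if f₁ x = k * f₀ x then γ else 0) * f₀ x ∂ν = α := by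
  classical
  -- the "strict" set and its size
  set s : ℝ → Set X := fun k => {x | k * f₀ x < f₁ x} with hs_def
  have hsmeas : ∀ k, MeasurableSet (s k) :=
    fun k => measurableSet_lt (hf₀m.const_mul k) hf₁m
  set g : ℝ → ℝ := fun k => ∫ x, Set.indicator (s k) f₀ x ∂ν with hg_def
  have hginteg : ∀ k, Integrable (Set.indicator (s k) f₀) ν :=
    fun k => hint₀.indicator (hsmeas k)
  -- indicator is nonneg and ≤ f₀
  have hind_nonneg : ∀ (t : Set X) (x : X), 0 ≤ Set.indicator t f₀ x := by
    intro t x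
    exact Set.indicator_nonneg (fun y _ => hf₀ y) x
  have hind_le : ∀ (t : Set X) (x : X), Set.indicator t f₀ x ≤ f₀ x := by
    intro t x
    exact Set.indicator_le_self' (fun y _ => hf₀ y) x
  -- g is antitone
  have hganti : ∀ k₁ k₂ : ℝ, k₁ ≤ k₂ → g k₂ ≤ g k₁ := by
    intro k₁ k₂ hk
    refine integral_mono (hginteg k₂) (hginteg k₁) ?_
    refine Set.indicator_le_indicator_of_subset ?_ hf₀
    intro x hx
    have h0 := hf₀ x
    simp only [hs_def, Set.mem_setOf_eq] at hx ⊢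
    nlinarith
  -- g k ≤ 1/k for k > 0
  have hgsmall : ∀ k : ℝ, 0 < k → g k ≤ 1 / k := by
    intro k hk
    have h1 : g k ≤ ∫ x, (1 / k) * f₁ x ∂ν := by
      refine integral_mono (hginteg k) (hint₁.const_mul _) ?_
      intro x
      show Set.indicator (s k) f₀ x ≤ 1 / k * f₁ x
      by_cases hx : x ∈ s k
      · have hlt : k * f₀ x < f₁ x := hx
        rw [Set.indicator_of_mem hx]
        rw [one_div, inv_mul_eq_div, le_div_iff₀ hk]
        nlinarith
      · rw [Set.indicator_of_notMem hx]
        exact mul_nonneg (by positivity) (hf₁ x)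
    rwa [integral_const_mul, hnorm₁, mul_one] at h1
  -- the set S and its infimum
  set S : Set ℝ := {k | 0 ≤ k ∧ g k ≤ α} with hS_def
  have hSne : S.Nonempty := by
    refine ⟨1 / α, le_of_lt (by positivity), ?_⟩
    have := hgsmall (1 / α) (by positivity)
    rwa [one_div_one_div] at this
  have hSbdd : BddBelow S := ⟨0, fun k hk => hk.1⟩
  set k₀ : ℝ := sInf S with hk₀_def
  have hk₀nonneg : 0 ≤ k₀ := le_csInf hSne (fun k hk => hk.1)
  -- dominated convergence helper
  have hDC : ∀ (u : ℕ → ℝ) (t : Set X), MeasurableSet t →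
      (∀ x, Tendsto (fun n => Set.indicator (s (u n)) f₀ x) atTop
        (nhds (Set.indicator t f₀ x))) →
      Tendsto (fun n => g (u n)) atTop (nhds (∫ x, Set.indicator t f₀ x ∂ν)) := by
    intro u t ht hconv
    refine tendsto_integral_of_dominated_convergence f₀
      (fun n => (hginteg (u n)).aestronglyMeasurable) hint₀ ?_ ?_
    · intro n
      filter_upwards with x
      rw [Real.norm_eq_abs, abs_of_nonneg (hind_nonneg _ x)]
      exact hind_le _ x
    · filter_upwards with x
      exact hconv x
  -- right continuity: g k₀ ≤ α
  have hseq_right : Tendsto (fun n : ℕ => k₀ + 1 / ((n : ℝ) + 1)) atTop (nhds k₀) := by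
    have := tendsto_one_div_add_atTop_nhds_zero_nat (𝕜 := ℝ)
    have h := this.const_add k₀
    simpa using h
  have hgk₀_le : g k₀ ≤ α := by
    have hconv : Tendsto (fun n : ℕ => g (k₀ + 1 / ((n : ℝ) + 1))) atTop (nhds (g k₀)) := by
      refine hDC _ (s k₀) (hsmeas k₀) ?_
      intro x
      by_cases hx : x ∈ s k₀
      · -- f₁ x > k₀ * f₀ x : eventually in s (k₀ + 1/(n+1))
        have hlt : k₀ * f₀ x < f₁ x := hx
        have htend : Tendsto (fun n : ℕ => (k₀ + 1 / ((n : ℝ) + 1)) * f₀ x) atTop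
            (nhds (k₀ * f₀ x)) := hseq_right.mul_const _
        have hev : ∀ᶠ n : ℕ in atTop, (k₀ + 1 / ((n : ℝ) + 1)) * f₀ x < f₁ x :=
          htend.eventually (eventually_lt_nhds hlt)
        rw [Set.indicator_of_mem hx]
        refine Tendsto.congr' ?_ tendsto_const_nhds
        filter_upwards [hev] with n hn
        exact (Set.indicator_of_mem (show x ∈ s (k₀ + 1 / ((n : ℝ) + 1)) from hn) f₀).symm
      · -- never in s (k₀ + 1/(n+1))
        rw [Set.indicator_of_notMem hx]
        refine Tendsto.congr' ?_ tendsto_const_nhds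
        filter_upwards with n
        have hx' : x ∉ s (k₀ + 1 / ((n : ℝ) + 1)) := by
          simp only [hs_def, Set.mem_setOf_eq, not_lt] at hx ⊢
          have h0 := hf₀ x
          have hpos : (0:ℝ) < 1 / ((n : ℝ) + 1) := by positivity
          nlinarith
        exact (Set.indicator_of_notMem hx' f₀).symm
    refine le_of_tendsto hconv ?_
    filter_upwards with n
    have hpos : (0:ℝ) < 1 / ((n : ℝ) + 1) := by positivity
    obtain ⟨m, hmS, hm⟩ := exists_lt_of_csInf_lt hSne (by linarith : k₀ < k₀ + 1 / ((n : ℝ) + 1))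
    exact le_trans (hganti m _ hm.le) hmS.2
  -- the "≥" set and its size
  set T : Set X := {x | k₀ * f₀ x ≤ f₁ x} with hT_def
  have hTmeas : MeasurableSet T := measurableSet_le (hf₀m.const_mul k₀) hf₁m
  set h : ℝ := ∫ x, Set.indicator T f₀ x ∂ν with hh_def
  have hTα : α ≤ h := by
    rcases eq_or_lt_of_le hk₀nonneg with hk0 | hk0
    · -- k₀ = 0 : T = univ, h = 1
      have hTuniv : T = Set.univ := by
        ext x
        simp only [hT_def, Set.mem_setOf_eq, Set.mem_univ, iff_true, ← hk0]
        simpa using hf₁ x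
      have : h = 1 := by
        rw [hh_def, hTuniv, Set.indicator_univ, hnorm₀]
      linarith
    · -- k₀ > 0 : approximate from the left
      set u : ℕ → ℝ := fun n => k₀ - k₀ / ((n : ℝ) + 1) with hu_def
      have hu_nonneg : ∀ n, 0 ≤ u n := by
        intro n
        have h1 : k₀ / ((n : ℝ) + 1) ≤ k₀ := by
          rw [div_le_iff₀ (by positivity)]
          nlinarith
        simp only [hu_def]; linarith
      have hu_lt : ∀ n, u n < k₀ := by
        intro n
        have : (0:ℝ) < k₀ / ((n : ℝ) + 1) := by positivity
        simp only [hu_def]; linarith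
      have hu_tend : Tendsto u atTop (nhds k₀) := by
        have h1 : Tendsto (fun n : ℕ => k₀ * (1 / ((n : ℝ) + 1))) atTop (nhds (k₀ * 0)) :=
          tendsto_one_div_add_atTop_nhds_zero_nat.const_mul k₀
        have h2 := (tendsto_const_nhds : Tendsto (fun _ : ℕ => k₀) atTop (nhds k₀)).sub h1
        simp only [mul_zero, sub_zero] at h2
        refine h2.congr ?_
        intro n
        simp only [hu_def, mul_one_div]
      have hconv : Tendsto (fun n => g (u n)) atTop (nhds h) := by
        refine hDC u T hTmeas ?_
        intro x
        rcases eq_or_lt_of_le (hf₀ x) with hf0 | hf0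
        · -- f₀ x = 0 : all values are 0
          have hxT : x ∈ T := by
            simp only [hT_def, Set.mem_setOf_eq, ← hf0, mul_zero]
            exact hf₁ x
          rw [Set.indicator_of_mem hxT, ← hf0]
          refine Tendsto.congr' ?_ tendsto_const_nhds
          filter_upwards with n
          by_cases hx : x ∈ s (u n)
          · rw [Set.indicator_of_mem hx, ← hf0]
          · rw [Set.indicator_of_notMem hx]
        · by_cases hxT : x ∈ T
          · -- k₀ f₀ x ≤ f₁ x, f₀ x > 0 : always in s (u n)
            have hle : k₀ * f₀ x ≤ f₁ x := hxT
            rw [Set.indicator_of_mem hxT]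
            refine Tendsto.congr' ?_ tendsto_const_nhds
            filter_upwards with n
            have hx : x ∈ s (u n) := by
              simp only [hs_def, Set.mem_setOf_eq]
              have := hu_lt n
              nlinarith
            exact (Set.indicator_of_mem hx f₀).symm
          · -- f₁ x < k₀ f₀ x : eventually not in s (u n)
            have hlt : f₁ x < k₀ * f₀ x := by
              simp only [hT_def, Set.mem_setOf_eq, not_le] at hxT
              exact hxT
            have htend : Tendsto (fun n : ℕ => u n * f₀ x) atTop (nhds (k₀ * f₀ x)) :=
              hu_tend.mul_const _
            have hev : ∀ᶠ n : ℕ in atTop, f₁ x < u n * f₀ x :=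
              htend.eventually (eventually_gt_nhds hlt)
            rw [Set.indicator_of_notMem hxT]
            refine Tendsto.congr' ?_ tendsto_const_nhds
            filter_upwards [hev] with n hn
            have hx : x ∉ s (u n) := by
              simp only [hs_def, Set.mem_setOf_eq, not_lt]
              exact hn.le
            exact (Set.indicator_of_notMem hx f₀).symm
      refine ge_of_tendsto hconv ?_
      filter_upwards with n
      have hnotS : u n ∉ S := by
        intro hmem
        exact absurd (csInf_le hSbdd hmem) (not_le.mpr (hu_lt n))
      have : ¬ g (u n) ≤ α := fun hc => hnotS ⟨hu_nonneg n, hc⟩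
      linarith [not_le.mp this]
  -- the boundary set and its size
  set B : Set X := {x | f₁ x = k₀ * f₀ x} with hB_def
  have hBmeas : MeasurableSet B := measurableSet_eq_fun hf₁m (hf₀m.const_mul k₀)
  set b : ℝ := ∫ x, Set.indicator B f₀ x ∂ν with hb_def
  have hBinteg : Integrable (Set.indicator B f₀) ν := hint₀.indicator hBmeas
  have hb_nonneg : 0 ≤ b := integral_nonneg (fun x => hind_nonneg B x)
  -- decomposition: h = g k₀ + b
  have hpoint : ∀ x, Set.indicator T f₀ x
      = Set.indicator (s k₀) f₀ x + Set.indicator B f₀ x := by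
    intro x
    rcases lt_trichotomy (k₀ * f₀ x) (f₁ x) with hcase | hcase | hcase
    · have hxT : x ∈ T := le_of_lt hcase
      have hxs : x ∈ s k₀ := hcase
      have hxB : x ∉ B := by
        simp only [hB_def, Set.mem_setOf_eq]; exact ne_of_gt hcase
      rw [Set.indicator_of_mem hxT, Set.indicator_of_mem hxs,
        Set.indicator_of_notMem hxB, add_zero]
    · have hxT : x ∈ T := le_of_eq hcase
      have hxs : x ∉ s k₀ := by
        simp only [hs_def, Set.mem_setOf_eq, not_lt]; exact le_of_eq hcase.symm
      have hxB : x ∈ B := hcase.symm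
      rw [Set.indicator_of_mem hxT, Set.indicator_of_notMem hxs,
        Set.indicator_of_mem hxB, zero_add]
    · have hxT : x ∉ T := by
        simp only [hT_def, Set.mem_setOf_eq, not_le]; exact hcase
      have hxs : x ∉ s k₀ := by
        simp only [hs_def, Set.mem_setOf_eq, not_lt]; exact le_of_lt hcase
      have hxB : x ∉ B := by
        simp only [hB_def, Set.mem_setOf_eq]; exact ne_of_lt hcase
      rw [Set.indicator_of_notMem hxT, Set.indicator_of_notMem hxs,
        Set.indicator_of_notMem hxB, add_zero]
  have hhgb : h = g k₀ + b := by
    rw [hh_def]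
    calc ∫ x, Set.indicator T f₀ x ∂ν
        = ∫ x, (Set.indicator (s k₀) f₀ x + Set.indicator B f₀ x) ∂ν := by
          exact integral_congr_ae (Filter.Eventually.of_forall hpoint)
      _ = g k₀ + b := integral_add (hginteg k₀) hBinteg
  -- choose γ
  set γ : ℝ := if b = 0 then 0 else (α - g k₀) / b with hγ_def
  have hγ0 : 0 ≤ γ := by
    rw [hγ_def]
    split_ifs with hb
    · exact le_refl 0
    · exact div_nonneg (by linarith) hb_nonneg
  have hγ1 : γ ≤ 1 := by
    rw [hγ_def]
    split_ifs with hb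
    · linarith
    · rw [div_le_one (lt_of_le_of_ne hb_nonneg (Ne.symm hb))]
      linarith [hhgb, hTα]
  -- size = g k₀ + γ * b
  have hsize_point : ∀ x, (if f₁ x > k₀ * f₀ x then (1 : ℝ)
      else if f₁ x = k₀ * f₀ x then γ else 0) * f₀ x
      = Set.indicator (s k₀) f₀ x + γ * Set.indicator B f₀ x := by
    intro x
    rcases lt_trichotomy (k₀ * f₀ x) (f₁ x) with hcase | hcase | hcase
    · have hxs : x ∈ s k₀ := hcase
      have hne : f₁ x ≠ k₀ * f₀ x := ne_of_gt hcase
      rw [if_pos hcase, Set.indicator_of_mem hxs,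
        Set.indicator_of_notMem (by simpa [hB_def] using hne)]
      ring
    · have hxs : x ∉ s k₀ := by
        simp only [hs_def, Set.mem_setOf_eq, not_lt]; exact le_of_eq hcase.symm
      have hxB : x ∈ B := hcase.symm
      rw [if_neg (by simp [gt_iff_lt, hcase.symm] : ¬ f₁ x > k₀ * f₀ x),
        if_pos hcase.symm, Set.indicator_of_notMem hxs, Set.indicator_of_mem hxB]
      ring
    · have hxs : x ∉ s k₀ := by
        simp only [hs_def, Set.mem_setOf_eq, not_lt]; exact le_of_lt hcase
      have hxB : x ∉ B := by
        simp only [hB_def, Set.mem_setOf_eq]; exact ne_of_lt hcase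
      rw [if_neg (by simp [gt_iff_lt, not_lt]; linarith : ¬ f₁ x > k₀ * f₀ x),
        if_neg (ne_of_lt hcase), Set.indicator_of_notMem hxs,
        Set.indicator_of_notMem hxB]
      ring
  have hsize : ∫ x, (if f₁ x > k₀ * f₀ x then (1 : ℝ)
      else if f₁ x = k₀ * f₀ x then γ else 0) * f₀ x ∂ν = g k₀ + γ * b := by
    calc ∫ x, (if f₁ x > k₀ * f₀ x then (1 : ℝ)
          else if f₁ x = k₀ * f₀ x then γ else 0) * f₀ x ∂ν
        = ∫ x, (Set.indicator (s k₀) f₀ x + γ * Set.indicator B f₀ x) ∂ν :=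
          integral_congr_ae (Filter.Eventually.of_forall hsize_point)
      _ = g k₀ + γ * b := by
          rw [integral_add (hginteg k₀) (hBinteg.const_mul γ), integral_const_mul]
  refine ⟨k₀, γ, hk₀nonneg, hγ0, hγ1, ?_⟩
  rw [hsize]
  rw [hγ_def]
  split_ifs with hb
  · -- b = 0 : g k₀ = α
    have : h = g k₀ := by rw [hhgb, hb, add_zero]
    have hα_le : α ≤ g k₀ := this ▸ hTα
    linarith
  · rw [div_mul_cancel₀ _ hb]
    ring
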